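/- If ξ, η ∈ ℂ* generate a dense subgroup of ℂ* of the second type (i.e. H_G = S¹), then for any nonzero rational exponents p = a/b, q = c/d with a,b,c,d positive integers, appropriate roots ξ^{p} and η^{q} (any fixed choice of b-th and d-th roots) also generate a dense subgroup of the second type. Consequently, the set of pairs (ξ, η) ∈ ℂ² generating a dense subgroup of the second type is dense in ℂ². -/

import Mathlib

open Complex Metric

noncomputable section

/-- `ξ, η` generate a dense subgroup of `ℂ*`. -/
def DensePair (ξ η : ℂ) : Prop :=
  Dense {z : ℂ | ∃ n m : ℤ, z = ξ ^ n * η ^ m}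

/-- `H_G = S¹`: every point of the unit circle is a limit of `(ξ/|ξ|)^{n_k}` along
integer sequences `(n_k, m_k)` with `ξ^{n_k} η^{m_k} → 1`. -/
def SecondType (ξ η : ℂ) : Prop :=
  ∀ z : ℂ, ‖z‖ = 1 → ∀ ε : ℝ, 0 < ε →
    ∃ n m : ℤ, ‖ξ ^ n * η ^ m - 1‖ < ε ∧
      ‖(ξ / (‖ξ‖ : ℂ)) ^ n - z‖ < ε

/-- The complex absolute value, as an absolute value (port shim). -/
def Complex.abs : AbsoluteValue ℂ ℝ where
  toFun z := ‖z‖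
  map_mul' := norm_mul
  nonneg' := norm_nonneg
  eq_zero' _ := norm_eq_zero
  add_le' := norm_add_le

lemma Complex.abs_apply (z : ℂ) : Complex.abs z = ‖z‖ := rfl

lemma Complex.abs_ofReal (r : ℝ) : Complex.abs (r : ℂ) = |r| := Complex.norm_real r

lemma Complex.abs_exp (z : ℂ) : Complex.abs (Complex.exp z) = Real.exp z.re := Complex.norm_exp z

lemma Complex.abs_mul_exp_arg_mul_I (z : ℂ) :
    ((Complex.abs z : ℝ) : ℂ) * Complex.exp (z.arg * Complex.I) = z :=
  Complex.norm_mul_exp_arg_mul_I z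

lemma Complex.abs_le_abs_re_add_abs_im (z : ℂ) : Complex.abs z ≤ |z.re| + |z.im| :=
  Complex.norm_le_abs_re_add_abs_im z


lemma abs_pow_sub_pow (u v : ℂ) (R : ℝ) (hR : 1 ≤ R) (hu : Complex.abs u ≤ R)
    (hv : Complex.abs v ≤ R) (k : ℕ) :
    Complex.abs (u ^ k - v ^ k) ≤ k * R ^ k * Complex.abs (u - v) := by
  induction k with
  | zero => simp
  | succ k ih =>
    have h1 : u ^ (k+1) - v ^ (k+1) = u ^ k * (u - v) + v * (u ^ k - v ^ k) := by ring
    have h2 : Complex.abs (u ^ (k+1) - v ^ (k+1))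
        ≤ Complex.abs (u ^ k) * Complex.abs (u - v) + Complex.abs v * Complex.abs (u ^ k - v ^ k) := by
      rw [h1]
      refine le_trans (Complex.abs.add_le _ _) ?_
      simp [map_mul]
    have hup : Complex.abs (u ^ k) ≤ R ^ k := by
      rw [map_pow]; exact pow_le_pow_left₀ (Complex.abs.nonneg u) hu k
    have hRk : (0:ℝ) < R ^ k := by positivity
    have h3 : Complex.abs v * Complex.abs (u ^ k - v ^ k) ≤ R * (k * R ^ k * Complex.abs (u - v)) := by
      apply mul_le_mul hv ih (Complex.abs.nonneg _) (by linarith)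
    have h4 : Complex.abs (u ^ k) * Complex.abs (u - v) ≤ R ^ k * Complex.abs (u - v) := by
      apply mul_le_mul_of_nonneg_right hup (Complex.abs.nonneg _)
    have h5 : R ^ k ≤ R ^ (k+1) := pow_le_pow_right₀ hR (by omega)
    have := Complex.abs.nonneg (u - v)
    calc Complex.abs (u ^ (k+1) - v ^ (k+1)) ≤ _ := h2
      _ ≤ R ^ k * Complex.abs (u - v) + R * (k * R ^ k * Complex.abs (u - v)) := by linarith
      _ ≤ (k+1) * R ^ (k+1) * Complex.abs (u - v) := by
          have : R * (k * R ^ k * Complex.abs (u - v)) = k * R^(k+1) * Complex.abs (u-v) := by ring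
          rw [this]
          have h6 : R ^ k * Complex.abs (u - v) ≤ R ^ (k+1) * Complex.abs (u - v) :=
            mul_le_mul_of_nonneg_right h5 (Complex.abs.nonneg _)
          nlinarith
      _ = (↑(k+1) : ℝ) * R ^ (k+1) * Complex.abs (u - v) := by push_cast; ring

lemma zpow_helper (x : ℂ) (K : ℕ) (n : ℤ) : ((x ^ K : ℂ)) ^ n = ((x ^ n : ℂ)) ^ K := by
  rw [← zpow_natCast x K, ← zpow_mul, mul_comm, zpow_mul, zpow_natCast]

lemma densePair_symm {ξ η : ℂ} (h : DensePair ξ η) : DensePair η ξ := by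
  have : {z : ℂ | ∃ n m : ℤ, z = η ^ n * ξ ^ m} = {z : ℂ | ∃ n m : ℤ, z = ξ ^ n * η ^ m} := by
    ext z
    constructor <;> rintro ⟨n, m, rfl⟩ <;> exact ⟨m, n, (mul_comm _ _)⟩
  rw [DensePair, this]; exact h

lemma densePair_inv_left {ξ η : ℂ} (h : DensePair ξ η) : DensePair ξ⁻¹ η := by
  have : {z : ℂ | ∃ n m : ℤ, z = ξ⁻¹ ^ n * η ^ m} = {z : ℂ | ∃ n m : ℤ, z = ξ ^ n * η ^ m} := by
    ext z
    constructor <;> rintro ⟨n, m, rfl⟩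
    · exact ⟨-n, m, by rw [zpow_neg, inv_zpow]⟩
    · exact ⟨-n, m, by rw [zpow_neg, inv_zpow, inv_inv]⟩
  rw [DensePair, this]; exact h

lemma densePair_inv_right {ξ η : ℂ} (h : DensePair ξ η) : DensePair ξ η⁻¹ :=
  densePair_symm (densePair_inv_left (densePair_symm h))

lemma secondType_inv_right {ξ η : ℂ} (h : SecondType ξ η) : SecondType ξ η⁻¹ := by
  intro z hz ε hε
  obtain ⟨n, m, h1, h2⟩ := h z hz ε hε
  exact ⟨n, -m, by rwa [zpow_neg, inv_zpow, inv_inv], h2⟩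

lemma secondType_inv_left {ξ η : ℂ} (hξ : ξ ≠ 0) (h : SecondType ξ η) : SecondType ξ⁻¹ η := by
  intro z hz ε hε
  obtain ⟨n, m, h1, h2⟩ := h z hz ε hε
  refine ⟨-n, m, ?_, ?_⟩
  · rwa [zpow_neg, inv_zpow, inv_inv]
  · have hd : ξ⁻¹ / ((Complex.abs ξ⁻¹ : ℝ) : ℂ) = (ξ / ((Complex.abs ξ : ℝ) : ℂ))⁻¹ := by
      rw [map_inv₀]
      push_cast
      rw [inv_div]
      simp [div_eq_mul_inv, mul_inv, mul_comm]
    simp only [← Complex.abs_apply] at h2 ⊢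
    rwa [hd, zpow_neg, inv_zpow, inv_inv]

lemma secondType_root (ξ η ξ' η' : ℂ) (hξ : ξ ≠ 0) (hη : η ≠ 0)
    (hsecond : SecondType ξ η) (a b c d : ℕ) (ha : 0 < a) (hb : 0 < b) (hc : 0 < c) (hd : 0 < d)
    (hξ' : ξ' ^ b = ξ ^ a) (hη' : η' ^ d = η ^ c) : SecondType ξ' η' := by
  intro z hz ε hε
  set K := a * c with hK
  have hKpos : 0 < K := Nat.mul_pos ha hc
  have hK1 : (1:ℝ) ≤ K := by exact_mod_cast hKpos
  -- K-th root of z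
  set w : ℂ := Complex.exp ((z.arg / K : ℝ) * Complex.I) with hw
  have hwabs : Complex.abs w = 1 := by simp [hw, Complex.abs_exp]
  have hwK : w ^ K = z := by
    rw [hw, ← Complex.exp_nat_mul]
    have h : (K:ℂ) * ((z.arg / K : ℝ) * Complex.I) = (z.arg:ℂ) * Complex.I := by
      have : (K:ℝ) ≠ 0 := by positivity
      push_cast
      field_simp
      rw [mul_comm]
      exact mul_div_cancel_right₀ _ (by exact_mod_cast this)
    rw [h]
    conv_rhs => rw [← Complex.abs_mul_exp_arg_mul_I z, Complex.abs_apply, hz]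
    simp
  -- small ε'
  have hden : (0:ℝ) < K * 2 ^ K := by positivity
  set ε' : ℝ := min 1 (ε / (2 * (K * 2 ^ K))) with hε'
  have hε'pos : 0 < ε' := by
    apply lt_min one_pos
    positivity
  have hε'1 : ε' ≤ 1 := min_le_left _ _
  have hε'2 : ε' ≤ ε / (2 * (K * 2 ^ K)) := min_le_right _ _
  obtain ⟨n, m, h1, h2⟩ := hsecond w hwabs ε' hε'pos
  refine ⟨((b * c : ℕ) : ℤ) * n, ((d * a : ℕ) : ℤ) * m, ?_, ?_⟩
  · -- product close to 1
    have e1 : ξ' ^ (((b * c : ℕ) : ℤ) * n) = (ξ ^ n) ^ K := by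
      rw [zpow_mul, zpow_natCast, pow_mul, hξ', ← pow_mul, zpow_helper]
    have e2 : η' ^ (((d * a : ℕ) : ℤ) * m) = (η ^ m) ^ K := by
      rw [zpow_mul, zpow_natCast, pow_mul, hη', ← pow_mul, mul_comm c a, zpow_helper]
    rw [e1, e2, ← mul_pow]
    have habs : Complex.abs (ξ ^ n * η ^ m) ≤ 2 := by
      have e : ξ ^ n * η ^ m = (ξ ^ n * η ^ m - 1) + 1 := by ring
      calc Complex.abs (ξ ^ n * η ^ m) = Complex.abs ((ξ ^ n * η ^ m - 1) + 1) := by rw [← e]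
        _ ≤ Complex.abs (ξ ^ n * η ^ m - 1) + Complex.abs 1 := Complex.abs.add_le _ _
        _ ≤ 2 := by simp only [map_one, Complex.abs_apply]; linarith
    have key : Complex.abs ((ξ ^ n * η ^ m) ^ K - 1) ≤ K * 2 ^ K * Complex.abs (ξ ^ n * η ^ m - 1) := by
      have := abs_pow_sub_pow (ξ ^ n * η ^ m) 1 2 one_le_two habs (by simp) K
      simpa using this
    calc Complex.abs ((ξ ^ n * η ^ m) ^ K - 1) ≤ _ := key
      _ < K * 2 ^ K * ε' := by
          apply mul_lt_mul_of_pos_left h1 hden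
      _ ≤ K * 2 ^ K * (ε / (2 * (K * 2 ^ K))) := by
          apply mul_le_mul_of_nonneg_left hε'2 (le_of_lt hden)
      _ < ε := by
          rw [mul_div_assoc']
          rw [div_lt_iff₀ (by positivity)]
          nlinarith
  · -- direction close to z
    have hξ'0 : ξ' ≠ 0 := by
      intro h0
      apply hξ
      have : ξ ^ a = 0 := by rw [← hξ', h0, zero_pow (by omega)]
      exact pow_eq_zero_iff (by omega) |>.mp this
    have habsξ' : (Complex.abs ξ') ^ b = (Complex.abs ξ) ^ a := by
      rw [← map_pow, ← map_pow, hξ']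
    set ζ' : ℂ := ξ' / ((Complex.abs ξ' : ℝ) : ℂ) with hζ'
    set ζ : ℂ := ξ / ((Complex.abs ξ : ℝ) : ℂ) with hζ
    have hζabs : Complex.abs ζ = 1 := by
      rw [hζ, map_div₀, Complex.abs_ofReal, _root_.abs_of_nonneg (Complex.abs.nonneg ξ),
        div_self (Complex.abs.ne_zero hξ)]
    have hζnabs : Complex.abs (ζ ^ n) = 1 := by
      rw [map_zpow₀, hζabs, one_zpow]
    have eζ : ζ' ^ (((b * c : ℕ) : ℤ) * n) = (ζ ^ n) ^ K := by
      have hb1 : ζ' ^ b = ζ ^ a := by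
        rw [hζ', hζ, div_pow, div_pow, hξ']
        congr 1
        rw [← Complex.ofReal_pow, ← Complex.ofReal_pow, habsξ']
      rw [zpow_mul, zpow_natCast, pow_mul, hb1, ← pow_mul, zpow_helper]
    simp only [← Complex.abs_apply]
    rw [← hζ']
    rw [eζ, ← hwK]
    have key : Complex.abs ((ζ ^ n) ^ K - w ^ K) ≤ K * 1 ^ K * Complex.abs (ζ ^ n - w) := by
      exact abs_pow_sub_pow _ _ 1 le_rfl (le_of_eq hζnabs) (le_of_eq hwabs) K
    calc Complex.abs ((ζ ^ n) ^ K - w ^ K) ≤ _ := key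
      _ = K * Complex.abs (ζ ^ n - w) := by rw [one_pow, mul_one]
      _ < K * ε' := by
          apply mul_lt_mul_of_pos_left h2 (by exact_mod_cast hKpos)
      _ ≤ K * (ε / (2 * (K * 2 ^ K))) := by
          apply mul_le_mul_of_nonneg_left hε'2 (by positivity)
      _ < ε := by
          have h2K : (1:ℝ) ≤ 2 ^ K := one_le_pow₀ one_le_two
          have hKD : (K:ℝ) ≤ (K:ℝ) * 2 ^ K := by nlinarith
          rw [mul_div_assoc', div_lt_iff₀ (by positivity)]
          nlinarith

lemma densePair_root (ξ η ξ' η' : ℂ) (hξ : ξ ≠ 0) (hη : η ≠ 0)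
    (hdense : DensePair ξ η) (a b c d : ℕ) (ha : 0 < a) (hb : 0 < b) (hc : 0 < c) (hd : 0 < d)
    (hξ' : ξ' ^ b = ξ ^ a) (hη' : η' ^ d = η ^ c) : DensePair ξ' η' := by
  have hA : (ξ ^ a : ℂ) ≠ 0 := pow_ne_zero _ hξ
  have hB : (η ^ c : ℂ) ≠ 0 := pow_ne_zero _ hη
  set S : Set ℂ := {z : ℂ | ∃ N M : ℤ, z = (ξ ^ a : ℂ) ^ N * (η ^ c : ℂ) ^ M} with hS
  set T : Set ℂ := closure S with hT
  have hST : S ⊆ T := subset_closure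
  have hone : (1:ℂ) ∈ S := ⟨0, 0, by simp⟩
  -- multiplicative closure of S and T
  have hSmul : ∀ z ∈ S, ∀ w ∈ S, z * w ∈ S := by
    rintro _ ⟨N, M, rfl⟩ _ ⟨N', M', rfl⟩
    refine ⟨N + N', M + M', ?_⟩
    rw [zpow_add₀ hA, zpow_add₀ hB]
    ring
  have hTmul : ∀ z ∈ T, ∀ w ∈ T, z * w ∈ T := by
    intro z hz w hw
    have hpair : (z, w) ∈ closure (S ×ˢ S) := by
      rw [closure_prod_eq]
      exact ⟨hz, hw⟩
    have := map_mem_closure (f := fun p : ℂ × ℂ => p.1 * p.2) (by continuity) hpair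
      (fun p hp => hSmul p.1 hp.1 p.2 hp.2)
    exact this
  have hTinv : ∀ z ∈ T, z ≠ 0 → z⁻¹ ∈ T := by
    intro z hz hz0
    have hc : ContinuousWithinAt (fun w : ℂ => w⁻¹) S z :=
      (continuousAt_inv₀ hz0).continuousWithinAt
    have := hc.mem_closure_image hz
    refine closure_mono ?_ this
    rintro _ ⟨_, ⟨N, M, rfl⟩, rfl⟩
    exact ⟨-N, -M, by simp [mul_inv, zpow_neg, mul_comm]⟩
  -- covering of ℂ by finitely many translates of T
  set F : Fin a × Fin c → Set ℂ := fun i =>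
    (fun w => ξ ^ (i.1 : ℕ) * η ^ (i.2 : ℕ) * w) '' T with hF
  have hg0 : ∀ i : Fin a × Fin c, (ξ ^ (i.1 : ℕ) * η ^ (i.2 : ℕ) : ℂ) ≠ 0 := fun i =>
    mul_ne_zero (pow_ne_zero _ hξ) (pow_ne_zero _ hη)
  have hFclosed : ∀ i, IsClosed (F i) := by
    intro i
    have := (Homeomorph.mulLeft₀ _ (hg0 i)).isClosedMap T isClosed_closure
    exact this
  have hcover : ⋃ i, F i = Set.univ := by
    apply Set.eq_univ_of_univ_subset
    have hDsub : {z : ℂ | ∃ n m : ℤ, z = ξ ^ n * η ^ m} ⊆ ⋃ i, F i := by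
      rintro _ ⟨n, m, rfl⟩
      have hra : 0 ≤ n % a ∧ n % a < a := by
        constructor
        · exact Int.emod_nonneg n (by exact_mod_cast ha.ne')
        · exact Int.emod_lt_of_pos n (by exact_mod_cast ha)
      have hrc : 0 ≤ m % c ∧ m % c < c := by
        constructor
        · exact Int.emod_nonneg m (by exact_mod_cast hc.ne')
        · exact Int.emod_lt_of_pos m (by exact_mod_cast hc)
      have hsa : ((n % a).toNat : ℤ) = n % a := Int.toNat_of_nonneg hra.1
      have hsc : ((m % c).toNat : ℤ) = m % c := Int.toNat_of_nonneg hrc.1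
      have hia : (n % a).toNat < a := by omega
      have hic : (m % c).toNat < c := by omega
      refine Set.mem_iUnion.mpr ⟨(⟨(n % a).toNat, hia⟩, ⟨(m % c).toNat, hic⟩), ?_⟩
      refine ⟨(ξ ^ a : ℂ) ^ (n / a : ℤ) * (η ^ c : ℂ) ^ (m / c : ℤ), hST ⟨_, _, rfl⟩, ?_⟩
      have hxi : ξ ^ n = ξ ^ ((n % a).toNat) * (ξ ^ a : ℂ) ^ (n / a : ℤ) := by
        rw [← zpow_natCast ξ (n % a).toNat, hsa, ← zpow_natCast ξ a, ← zpow_mul,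
          ← zpow_add₀ hξ]
        congr 1
        rw [add_comm]
        exact (Int.mul_ediv_add_emod n (a:ℤ)).symm
      have heta : η ^ m = η ^ ((m % c).toNat) * (η ^ c : ℂ) ^ (m / c : ℤ) := by
        rw [← zpow_natCast η (m % c).toNat, hsc, ← zpow_natCast η c, ← zpow_mul,
          ← zpow_add₀ hη]
        congr 1
        rw [add_comm]
        exact (Int.mul_ediv_add_emod m (c:ℤ)).symm
      simp only []
      rw [hxi, heta]
      ring
    calc Set.univ = closure {z : ℂ | ∃ n m : ℤ, z = ξ ^ n * η ^ m} := (hdense.closure_eq).symm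
      _ ⊆ ⋃ i, F i := closure_minimal hDsub (isClosed_iUnion_of_finite hFclosed)
  -- Baire
  obtain ⟨i, hi⟩ := nonempty_interior_of_iUnion_of_closed hFclosed hcover
  have hTint : (interior T).Nonempty := by
    have himg : F i = (Homeomorph.mulLeft₀ _ (hg0 i)) '' T := by
      rfl
    rw [himg, ← Homeomorph.image_interior] at hi
    obtain ⟨_, ⟨v, hv, rfl⟩⟩ := hi
    exact ⟨v, hv⟩
  obtain ⟨v, hv⟩ := hTint
  obtain ⟨ρ, hρ, hball⟩ := Metric.isOpen_iff.mp isOpen_interior v hv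
  have hballT : ball v ρ ⊆ T := hball.trans interior_subset
  -- a nonzero center
  obtain ⟨v', hv'0, hv'ball⟩ : ∃ v' : ℂ, v' ≠ 0 ∧ ball v' (ρ/2) ⊆ T := by
    by_cases h0 : v = 0
    · refine ⟨((ρ/2 : ℝ) : ℂ), by simp [hρ.ne'], ?_⟩
      intro w hw
      apply hballT
      rw [mem_ball] at hw ⊢
      have h1 : dist w v ≤ dist w ((ρ/2 : ℝ) : ℂ) + dist ((ρ/2 : ℝ) : ℂ) v := dist_triangle _ _ _
      have h2 : dist ((ρ/2 : ℝ) : ℂ) v = ρ/2 := by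
        rw [h0, Complex.dist_eq, sub_zero, Complex.norm_real]
        exact _root_.abs_of_nonneg (by linarith)
      linarith
    · exact ⟨v, h0, fun w hw => hballT (by rw [mem_ball] at hw ⊢; linarith [hw])⟩
  have hρ2 : 0 < ρ/2 := by linarith
  have hv'T : v' ∈ T := hv'ball (mem_ball_self hρ2)
  -- M is open
  set M : Set ℂ := {z : ℂ | z ∈ T ∧ z ≠ 0} with hM
  have hMopen : IsOpen M := by
    rw [Metric.isOpen_iff]
    rintro m ⟨hmT, hm0⟩
    have hmabs : 0 < Complex.abs m := Complex.abs.pos hm0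
    have hv'abs : 0 < Complex.abs v' := Complex.abs.pos hv'0
    refine ⟨min ((ρ/2) * Complex.abs m / Complex.abs v') (Complex.abs m), by positivity, ?_⟩
    intro w hw
    rw [mem_ball, Complex.dist_eq] at hw
    have hw1 : Complex.abs (w - m) < (ρ/2) * Complex.abs m / Complex.abs v' :=
      lt_of_lt_of_le hw (min_le_left _ _)
    have hw2 : Complex.abs (w - m) < Complex.abs m := lt_of_lt_of_le hw (min_le_right _ _)
    have hw0 : w ≠ 0 := by
      intro h
      rw [h, zero_sub, map_neg_eq_map] at hw2
      exact lt_irrefl _ hw2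
    have hu : v' * w / m ∈ ball v' (ρ/2) := by
      rw [mem_ball, Complex.dist_eq]
      have : v' * w / m - v' = v' * (w - m) / m := by field_simp
      rw [this, ← Complex.abs_apply, map_div₀, map_mul]
      rw [div_lt_iff₀ hmabs]
      calc Complex.abs v' * Complex.abs (w - m)
          < Complex.abs v' * ((ρ/2) * Complex.abs m / Complex.abs v') := by
            exact mul_lt_mul_of_pos_left hw1 hv'abs
        _ = ρ/2 * Complex.abs m := by field_simp
    have huT : v' * w / m ∈ T := hv'ball hu
    have hwT : w ∈ T := by
      have : w = m * (v' * w / m) * v'⁻¹ := by field_simp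
      rw [this]
      exact hTmul _ (hTmul m hmT _ huT) _ (hTinv v' hv'T hv'0)
    exact ⟨hwT, hw0⟩
  -- connectedness of ℂ \ {0}
  have hU : IsPreconnected {z : ℂ | z ≠ 0} := by
    have h1 : IsPreconnected (Set.range Complex.exp) := by
      rw [← Set.image_univ]
      exact isPreconnected_univ.image Complex.exp Complex.continuous_exp.continuousOn
    have h2 : {z : ℂ | z ≠ 0} = Set.range Complex.exp := by
      rw [Complex.range_exp]
      ext z; simp
    rw [h2]
    exact h1
  -- U ⊆ T
  have hUT : {z : ℂ | z ≠ 0} ⊆ T := by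
    by_contra hcon
    rw [Set.not_subset] at hcon
    obtain ⟨z₀, hz₀U, hz₀T⟩ := hcon
    have := hU M Tᶜ hMopen (isClosed_closure.isOpen_compl)
      (fun z hz => by by_cases hzT : z ∈ T
                      · exact Or.inl ⟨hzT, hz⟩
                      · exact Or.inr hzT)
      ⟨v', hv'0, hv'T, hv'0⟩ ⟨z₀, hz₀U, hz₀T⟩
    obtain ⟨y, _, ⟨hyT, _⟩, hyTc⟩ := this
    exact hyTc hyT
  have hTuniv : T = Set.univ := by
    apply Set.eq_univ_of_univ_subset
    have hdU : Dense {z : ℂ | z ≠ 0} := by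
      have : {z : ℂ | z ≠ 0} = ({0} : Set ℂ)ᶜ := by ext z; simp
      rw [this]
      exact dense_compl_singleton 0
    calc Set.univ = closure {z : ℂ | z ≠ 0} := (hdU.closure_eq).symm
      _ ⊆ closure T := closure_mono hUT
      _ = T := isClosed_closure.closure_eq
  -- conclude
  have hSdense : Dense S := by
    rw [dense_iff_closure_eq]
    exact hTuniv
  apply hSdense.mono
  rintro _ ⟨N, M, rfl⟩
  refine ⟨(b : ℤ) * N, (d : ℤ) * M, ?_⟩
  rw [zpow_mul, zpow_mul, zpow_natCast, zpow_natCast, hξ', hη']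

lemma zpow_gap (r : ℝ) (hr : 0 < r) (hr1 : r ≠ 1) (m : ℤ) :
    r ^ m ≤ 1 ∨ max r r⁻¹ ≤ r ^ m := by
  rcases le_or_gt r 1 with h | h
  · have hrlt : r < 1 := lt_of_le_of_ne h hr1
    have hinv : 1 < r⁻¹ := (one_lt_inv₀ hr).2 hrlt
    have hmax : max r r⁻¹ = r⁻¹ := max_eq_right (by linarith)
    rcases le_or_gt 0 m with hm | hm
    · left
      have e : r ^ m = r⁻¹ ^ (-m) := by rw [inv_zpow, ← zpow_neg, neg_neg]
      rw [e]
      exact zpow_le_one_of_nonpos₀ hinv.le (by omega)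
    · right
      rw [hmax]
      have : r ^ m = r⁻¹ ^ (-m) := by rw [inv_zpow, ← zpow_neg, neg_neg]
      rw [this]
      calc r⁻¹ = r⁻¹ ^ (1:ℤ) := (zpow_one _).symm
        _ ≤ r⁻¹ ^ (-m) := by
            apply zpow_le_zpow_right₀ (le_of_lt hinv)
            omega
  · have hmax : max r r⁻¹ = r := max_eq_left (by
      have : r⁻¹ < 1 := by rw [inv_lt_one_iff₀]; right; exact h
      linarith)
    rcases le_or_gt m 0 with hm | hm
    · left
      exact zpow_le_one_of_nonpos₀ h.le hm
    · right
      rw [hmax]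
      calc r = r ^ (1:ℤ) := (zpow_one _).symm
        _ ≤ r ^ m := by
            apply zpow_le_zpow_right₀ (le_of_lt h)
            omega

lemma densePair_abs_ne_one (ξ η : ℂ) (hdense : DensePair ξ η) : Complex.abs ξ ≠ 1 := by
  intro habs
  set r : ℝ := Complex.abs η with hr
  by_cases hcase : η = 0 ∨ r = 1
  · -- all moduli ≤ 1
    obtain ⟨g, hgball, n, m, rfl⟩ := Metric.dense_iff.mp hdense 2 (1/2) (by norm_num)
    have hmod : Complex.abs (ξ ^ n * η ^ m) ≤ 1 := by
      rw [map_mul, map_zpow₀, habs, one_zpow, one_mul, map_zpow₀]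
      rcases hcase with h0 | h1
      · rcases eq_or_ne m 0 with rfl | hm
        · simp
        · rw [h0]
          simp [zero_zpow m hm]
      · rw [← hr, h1, one_zpow]
    rw [mem_ball, Complex.dist_eq, ← Complex.abs_apply] at hgball
    have : (2:ℝ) - Complex.abs (ξ ^ n * η ^ m) ≤ Complex.abs (ξ ^ n * η ^ m - 2) := by
      have := Complex.abs.abs_abv_sub_le_abv_sub (ξ ^ n * η ^ m) 2
      have h2 : Complex.abs (2:ℂ) = 2 := by rw [Complex.abs_apply]; norm_num
      rw [h2] at this
      cases' abs_le.mp this with h3 h4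
      linarith
    linarith
  · push_neg at hcase
    obtain ⟨hη0, hr1⟩ := hcase
    have hrpos : 0 < r := Complex.abs.pos hη0
    set ρ : ℝ := max r r⁻¹ with hρ
    have hρ1 : 1 < ρ := by
      rcases lt_or_gt_of_ne hr1 with h | h
      · calc (1:ℝ) < r⁻¹ := (one_lt_inv₀ hrpos).2 h
          _ ≤ ρ := le_max_right _ _
      · calc (1:ℝ) < r := h
          _ ≤ ρ := le_max_left _ _
    obtain ⟨g, hgball, n, m, rfl⟩ := Metric.dense_iff.mp hdense (((1+ρ)/2 : ℝ) : ℂ)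
      ((ρ-1)/4) (by linarith)
    have hmod : Complex.abs (ξ ^ n * η ^ m) = r ^ m := by
      rw [map_mul, map_zpow₀, habs, one_zpow, one_mul, map_zpow₀]
    rw [mem_ball, Complex.dist_eq, ← Complex.abs_apply] at hgball
    have hclose : |Complex.abs (ξ ^ n * η ^ m) - (1+ρ)/2| < (ρ-1)/4 := by
      have h1 := Complex.abs.abs_abv_sub_le_abv_sub (ξ ^ n * η ^ m) (((1+ρ)/2 : ℝ) : ℂ)
      have h2 : Complex.abs ((((1+ρ)/2 : ℝ)) : ℂ) = (1+ρ)/2 := by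
        rw [Complex.abs_ofReal]
        exact _root_.abs_of_nonneg (by linarith)
      rw [h2] at h1
      linarith
    rcases zpow_gap r hrpos hr1 m with h | h
    · rw [hmod] at hclose
      cases' abs_lt.mp hclose with h3 h4
      linarith
    · rw [hmod] at hclose
      cases' abs_lt.mp hclose with h3 h4
      rw [← hρ] at h
      linarith

lemma root_approx (ξ : ℂ) (hξ : ξ ≠ 0) (hmod : Complex.abs ξ ≠ 1) (w : ℂ) (hw : w ≠ 0)
    (ε : ℝ) (hε : 0 < ε) :
    ∃ (ξ' : ℂ) (a b : ℕ), 0 < a ∧ 0 < b ∧ (ξ' ^ b = ξ ^ a ∨ ξ' ^ b = ξ⁻¹ ^ a) ∧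
      Complex.abs (ξ' - w) < ε := by
  set x : ℝ := Real.log (Complex.abs ξ) with hx
  have habspos : 0 < Complex.abs ξ := Complex.abs.pos hξ
  have hx0 : x ≠ 0 := by
    intro h
    rcases Real.log_eq_zero.mp h with h1 | h1 | h1
    · exact habspos.ne' h1
    · exact hmod h1
    · linarith
  set L : ℂ := Complex.log w with hL
  -- continuity of exp at L
  obtain ⟨δ, hδ, hδprop⟩ := Metric.continuousAt_iff.mp Complex.continuous_exp.continuousAt ε hε
  -- choose b
  set C : ℝ := 3 * |x| / 2 + Real.pi + 1 with hC
  have hCpos : 0 < C := by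
    have := Real.pi_pos
    have := abs_nonneg x
    rw [hC]; linarith
  set b : ℕ := ⌈C / δ⌉₊ + 1 with hb
  have hbpos : 0 < b := Nat.succ_pos _
  have hbR : (0:ℝ) < b := by exact_mod_cast hbpos
  have hbC : C / (b:ℝ) < δ := by
    have h1 : C / δ ≤ (⌈C / δ⌉₊ : ℝ) := Nat.le_ceil _
    have h2 : C / δ < (b:ℝ) := by
      rw [hb]; push_cast; linarith
    rw [div_lt_iff₀ hbR]
    rw [div_lt_iff₀ hδ] at h2
    linarith [mul_comm δ (b:ℝ) ▸ h2]
  clear_value b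
  clear hb
  -- choose n₁
  set q₀ : ℝ := L.re / x with hq₀
  set n₀ : ℤ := round ((b:ℝ) * q₀) with hn₀
  set n₁ : ℤ := if n₀ = 0 then 1 else n₀ with hn₁
  have hn₁0 : n₁ ≠ 0 := by
    rw [hn₁]; split
    · exact one_ne_zero
    · assumption
  have hn₁close : |(n₁:ℝ) - b * q₀| ≤ 3/2 := by
    have hround : |(n₀:ℝ) - b * q₀| ≤ 1/2 := by
      rw [hn₀, abs_sub_comm]
      exact abs_sub_round _
    rw [hn₁]; split
    · rename_i h0
      rw [h0] at hround
      push_cast at hround ⊢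
      cases' abs_le.mp hround with h1 h2
      rw [abs_le]
      constructor <;> linarith
    · exact le_trans hround (by norm_num)
  -- choose k
  clear_value n₀ n₁
  clear hn₀ hn₁
  set t : ℝ := ((b:ℝ) * L.im - (n₁:ℝ) * (Complex.log ξ).im) / (2 * Real.pi) with ht
  set k : ℤ := round t with hk
  -- define u
  set uRe : ℝ := (n₁:ℝ) * x / b with huRe
  set uIm : ℝ := ((n₁:ℝ) * (Complex.log ξ).im + 2 * Real.pi * k) / b with huIm
  set u : ℂ := (uRe : ℂ) + (uIm : ℂ) * Complex.I with hu
  have hpi := Real.pi_pos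
  -- b * u = n₁ * log ξ + k * (2πI)
  have hbu : (b:ℂ) * u = (n₁:ℂ) * Complex.log ξ + (k:ℂ) * (2 * (Real.pi:ℂ) * Complex.I) := by
    have hlogξ : Complex.log ξ = ((Complex.log ξ).re : ℂ) + ((Complex.log ξ).im : ℂ) * Complex.I :=
      (Complex.re_add_im _).symm
    have hre : (Complex.log ξ).re = x := by rw [hx, Complex.log_re]; rfl
    rw [hu, huRe, huIm]
    rw [hlogξ, hre]
    have hbne : (b:ℂ) ≠ 0 := by exact_mod_cast hbR.ne'
    push_cast
    field_simp
    ring_nf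
    simp
  set ξ' : ℂ := Complex.exp u with hξ'
  have hpow : ξ' ^ b = ξ ^ n₁ := by
    rw [hξ', ← Complex.exp_nat_mul, hbu, Complex.exp_add]
    rw [Complex.exp_int_mul, Complex.exp_log hξ]
    have : Complex.exp ((k:ℂ) * (2 * (Real.pi:ℂ) * Complex.I)) = 1 := by
      exact_mod_cast Complex.exp_int_mul_two_pi_mul_I k
    rw [this, mul_one]
  -- distance estimate
  have hdist : Complex.abs (u - L) < δ := by
    have hre : (u - L).re = uRe - L.re := by simp [hu]
    have him : (u - L).im = uIm - L.im := by simp [hu]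
    have h1 : Complex.abs (u - L) ≤ |uRe - L.re| + |uIm - L.im| := by
      calc Complex.abs (u - L) ≤ |(u - L).re| + |(u - L).im| := Complex.abs_le_abs_re_add_abs_im _
        _ = |uRe - L.re| + |uIm - L.im| := by rw [hre, him]
    have h2 : |uRe - L.re| ≤ 3 * |x| / 2 / b := by
      have : uRe - L.re = x * ((n₁:ℝ) - b * q₀) / b := by
        rw [huRe, hq₀]
        field_simp
      rw [this, abs_div, abs_mul]
      rw [_root_.abs_of_nonneg hbR.le]
      gcongr
      calc |x| * |(n₁:ℝ) - b * q₀| ≤ |x| * (3/2) := by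
            apply mul_le_mul_of_nonneg_left hn₁close (abs_nonneg x)
        _ = 3 * |x| / 2 := by ring
    have h3 : |uIm - L.im| ≤ Real.pi / b := by
      have he : uIm - L.im = (2 * Real.pi * ((k:ℝ) - t)) / b := by
        rw [huIm, ht]
        field_simp
        ring
      rw [he, abs_div, _root_.abs_of_nonneg hbR.le, abs_mul]
      have hkt : |(k:ℝ) - t| ≤ 1/2 := by rw [hk, abs_sub_comm]; exact abs_sub_round t
      have : |2 * Real.pi| = 2 * Real.pi := _root_.abs_of_nonneg (by linarith)
      rw [this]
      gcongr
      calc 2 * Real.pi * |(k:ℝ) - t| ≤ 2 * Real.pi * (1/2) := by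
            apply mul_le_mul_of_nonneg_left hkt (by linarith)
        _ = Real.pi := by ring
    calc Complex.abs (u - L) ≤ |uRe - L.re| + |uIm - L.im| := h1
      _ ≤ 3 * |x| / 2 / b + Real.pi / b := by linarith
      _ = (3 * |x| / 2 + Real.pi) / b := by ring
      _ < C / b := by
          apply (div_lt_div_iff_of_pos_right hbR).mpr
          rw [hC]; linarith
      _ < δ := hbC
  have hfinal : Complex.abs (ξ' - w) < ε := by
    have := hδprop (show dist u L < δ by rwa [Complex.dist_eq])
    rwa [Complex.dist_eq, hL, Complex.exp_log hw] at this
  -- assemble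
  rcases lt_or_ge 0 n₁ with hpos | hneg
  · refine ⟨ξ', n₁.toNat, b, by omega, hbpos, Or.inl ?_, hfinal⟩
    rw [hpow, ← zpow_natCast ξ n₁.toNat, Int.toNat_of_nonneg hpos.le]
  · have hlt : n₁ < 0 := lt_of_le_of_ne hneg hn₁0
    refine ⟨ξ', (-n₁).toNat, b, by omega, hbpos, Or.inr ?_, hfinal⟩
    rw [hpow, ← zpow_natCast ξ⁻¹ (-n₁).toNat, Int.toNat_of_nonneg (by omega), inv_zpow,
      ← zpow_neg, neg_neg]

lemma good_root (ξ η ξ' η' : ℂ) (hξ : ξ ≠ 0) (hη : η ≠ 0)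
    (hdense : DensePair ξ η) (hsecond : SecondType ξ η)
    (a b c d : ℕ) (ha : 0 < a) (hb : 0 < b) (hc : 0 < c) (hd : 0 < d)
    (hξ' : ξ' ^ b = ξ ^ a) (hη' : η' ^ d = η ^ c) : DensePair ξ' η' ∧ SecondType ξ' η' :=
  ⟨densePair_root ξ η ξ' η' hξ hη hdense a b c d ha hb hc hd hξ' hη',
   secondType_root ξ η ξ' η' hξ hη hsecond a b c d ha hb hc hd hξ' hη'⟩

theorem stmt_12 (ξ η : ℂ) (hξ : ξ ≠ 0) (hη : η ≠ 0)
    (hdense : DensePair ξ η) (hsecond : SecondType ξ η) :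
    (∀ a b c d : ℕ, 0 < a → 0 < b → 0 < c → 0 < d →
      ∀ ξ' η' : ℂ, ξ' ^ b = ξ ^ a → η' ^ d = η ^ c →
        DensePair ξ' η' ∧ SecondType ξ' η') ∧
    Dense {p : ℂ × ℂ | p.1 ≠ 0 ∧ p.2 ≠ 0 ∧ DensePair p.1 p.2 ∧ SecondType p.1 p.2} := by
  constructor
  · intro a b c d ha hb hc hd ξ' η' hξ' hη'
    exact good_root ξ η ξ' η' hξ hη hdense hsecond a b c d ha hb hc hd hξ' hη'
  · rw [Metric.dense_iff]
    rintro ⟨w₁, w₂⟩ ε hε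
    have habsξ : Complex.abs ξ ≠ 1 := densePair_abs_ne_one ξ η hdense
    have habsη : Complex.abs η ≠ 1 := densePair_abs_ne_one η ξ (densePair_symm hdense)
    -- nonzero targets
    set w₁' : ℂ := if w₁ = 0 then ((ε/4 : ℝ) : ℂ) else w₁ with hw₁'
    set w₂' : ℂ := if w₂ = 0 then ((ε/4 : ℝ) : ℂ) else w₂ with hw₂'
    have hw₁'0 : w₁' ≠ 0 := by
      rw [hw₁']; split
      · simp only [ne_eq, Complex.ofReal_eq_zero]; intro h; linarith
      · assumption
    have hw₂'0 : w₂' ≠ 0 := by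
      rw [hw₂']; split
      · simp only [ne_eq, Complex.ofReal_eq_zero]; intro h; linarith
      · assumption
    have hw₁'close : Complex.abs (w₁' - w₁) < ε/2 := by
      rw [hw₁']; split
      · rename_i h; rw [h, sub_zero, Complex.abs_ofReal]
        rw [_root_.abs_of_nonneg (by linarith)]; linarith
      · simp; linarith
    have hw₂'close : Complex.abs (w₂' - w₂) < ε/2 := by
      rw [hw₂']; split
      · rename_i h; rw [h, sub_zero, Complex.abs_ofReal]
        rw [_root_.abs_of_nonneg (by linarith)]; linarith
      · simp; linarith
    obtain ⟨ξ', a₁, b₁, ha₁, hb₁, hor₁, hd₁⟩ :=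
      root_approx ξ hξ habsξ w₁' hw₁'0 (ε/2) (by linarith)
    obtain ⟨η', a₂, b₂, ha₂, hb₂, hor₂, hd₂⟩ :=
      root_approx η hη habsη w₂' hw₂'0 (ε/2) (by linarith)
    have hξ'0 : ξ' ≠ 0 := by
      rcases hor₁ with h | h
      · intro h0
        have : ξ' ^ b₁ ≠ 0 := h ▸ pow_ne_zero _ hξ
        exact this (by rw [h0, zero_pow hb₁.ne'])
      · intro h0
        have : ξ' ^ b₁ ≠ 0 := h ▸ pow_ne_zero _ (inv_ne_zero hξ)
        exact this (by rw [h0, zero_pow hb₁.ne'])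
    have hη'0 : η' ≠ 0 := by
      rcases hor₂ with h | h
      · intro h0
        have : η' ^ b₂ ≠ 0 := h ▸ pow_ne_zero _ hη
        exact this (by rw [h0, zero_pow hb₂.ne'])
      · intro h0
        have : η' ^ b₂ ≠ 0 := h ▸ pow_ne_zero _ (inv_ne_zero hη)
        exact this (by rw [h0, zero_pow hb₂.ne'])
    have hgood : DensePair ξ' η' ∧ SecondType ξ' η' := by
      rcases hor₁ with h1 | h1 <;> rcases hor₂ with h2 | h2
      · exact good_root ξ η ξ' η' hξ hη hdense hsecond a₁ b₁ a₂ b₂ ha₁ hb₁ ha₂ hb₂ h1 h2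
      · exact good_root ξ η⁻¹ ξ' η' hξ (inv_ne_zero hη) (densePair_inv_right hdense)
          (secondType_inv_right hsecond) a₁ b₁ a₂ b₂ ha₁ hb₁ ha₂ hb₂ h1 h2
      · exact good_root ξ⁻¹ η ξ' η' (inv_ne_zero hξ) hη (densePair_inv_left hdense)
          (secondType_inv_left hξ hsecond) a₁ b₁ a₂ b₂ ha₁ hb₁ ha₂ hb₂ h1 h2
      · exact good_root ξ⁻¹ η⁻¹ ξ' η' (inv_ne_zero hξ) (inv_ne_zero hη)
          (densePair_inv_left (densePair_inv_right hdense))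
          (secondType_inv_left hξ (secondType_inv_right hsecond))
          a₁ b₁ a₂ b₂ ha₁ hb₁ ha₂ hb₂ h1 h2
    refine ⟨(ξ', η'), ?_, hξ'0, hη'0, hgood.1, hgood.2⟩
    rw [mem_ball, Prod.dist_eq]
    apply max_lt
    · rw [Complex.dist_eq]
      calc Complex.abs (ξ' - w₁) ≤ Complex.abs (ξ' - w₁') + Complex.abs (w₁' - w₁) := by
            have : ξ' - w₁ = (ξ' - w₁') + (w₁' - w₁) := by ring
            rw [this]; exact Complex.abs.add_le _ _
        _ < ε := by linarith
    · rw [Complex.dist_eq]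
      calc Complex.abs (η' - w₂) ≤ Complex.abs (η' - w₂') + Complex.abs (w₂' - w₂) := by
            have : η' - w₂ = (η' - w₂') + (w₂' - w₂) := by ring
            rw [this]; exact Complex.abs.add_le _ _
        _ < ε := by linarith

end
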